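/- Let (A,•,ω) be a symplectic left Leibniz algebra over a field K of characteristic zero, with A finite-dimensional, and let ⋆ be the bilinear product determined by ω(u⋆v, w) = −ω(v, u•w) for all u,v,w ∈ A. Then ⋆ is left symmetric; in particular the bracket [u,v] = (1/2)(u•v − v•u) satisfies the Jacobi identity, i.e., (A,•) is Lie-admissible. -/

import Mathlib

/-- For a symplectic left Leibniz algebra `(A, •, ω)` with `⋆` determined
by `ω(u⋆v, w) = −ω(v, u•w)`, the product `⋆` is left symmetric and the bracket
`[u,v] = (1/2)(u•v − v•u)` satisfies the Jacobi identity. -/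
theorem stmt2 {K A : Type*} [Field K] [CharZero K] [AddCommGroup A] [Module K A]
    [FiniteDimensional K A]
    (mul star : A →ₗ[K] A →ₗ[K] A) (ω : A →ₗ[K] A →ₗ[K] K)
    (hleib : ∀ u v w : A, mul u (mul v w) = mul (mul u v) w + mul v (mul u w))
    (hskew : ∀ u v : A, ω u v = - ω v u)
    (hnondeg : ∀ u : A, (∀ v : A, ω u v = 0) → u = 0)
    (hsymp : ∀ u v w : A, ω u (mul v w) - ω v (mul u w)
      = (1/2 : K) * ω (mul u v) w - (1/2 : K) * ω (mul v u) w)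
    (hstar : ∀ u v w : A, ω (star u v) w = - ω v (mul u w))
    (brk : A → A → A)
    (hbrk : ∀ u v : A, brk u v = (1/2 : K) • (mul u v - mul v u)) :
    (∀ u v w : A, star (star u v) w - star u (star v w)
        = star (star v u) w - star v (star u w)) ∧
      (∀ u v w : A, brk (brk u v) w + brk (brk v w) u + brk (brk w u) v = 0) := by
  -- left multiplication by symmetric parts vanishes
  have hsq : ∀ u v z : A, mul (mul v u) z = - mul (mul u v) z := by
    intro u v z
    have h1 := hleib u v z
    have h2 := hleib v u z
    rw [h2, ← add_assoc] at h1
    exact eq_neg_of_add_eq_zero_right (right_eq_add.mp h1)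
  have hlb : ∀ u v z : A, mul u (mul v z) - mul v (mul u z) = mul (mul u v) z := by
    intro u v z; rw [hleib u v z]; abel
  -- star u v - star v u = (1/2)(uv - vu)
  have hdiff : ∀ u v : A, star u v - star v u = (1/2 : K) • (mul u v - mul v u) := by
    intro u v
    have h0 : ∀ z : A, ω (star u v - star v u - (1/2 : K) • (mul u v - mul v u)) z = 0 := by
      intro z
      simp only [map_sub, map_smul, LinearMap.sub_apply, LinearMap.smul_apply, hstar,
        smul_eq_mul]
      linear_combination hsymp u v z
    exact sub_eq_zero.mp (hnondeg _ h0)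
  -- left symmetry
  have lsym : ∀ u v w : A, star (star u v) w - star u (star v w)
      = star (star v u) w - star v (star u w) := by
    intro u v w
    have e1 : ∀ z : A, mul (star u v) z - mul (star v u) z = mul (mul u v) z := by
      intro z
      have h : mul (star u v) z - mul (star v u) z
          = mul ((1/2 : K) • (mul u v - mul v u)) z := by
        rw [← hdiff u v]; simp only [map_sub, LinearMap.sub_apply]
      rw [h]
      simp only [map_smul, map_sub, LinearMap.smul_apply, LinearMap.sub_apply, hsq u v z,
        sub_neg_eq_add, ← two_smul K (mul (mul u v) z), smul_smul]
      norm_num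
    have h0 : ∀ z : A, ω (star (star u v) w - star u (star v w)
        - (star (star v u) w - star v (star u w))) z = 0 := by
      intro z
      simp only [map_sub, LinearMap.sub_apply, hstar, neg_neg]
      have e2 : ω w (mul (star u v) z) - ω w (mul (star v u) z)
          = ω w (mul (mul u v) z) := by rw [← map_sub, e1 z]
      have e3 : ω w (mul u (mul v z)) - ω w (mul v (mul u z))
          = ω w (mul (mul u v) z) := by rw [← map_sub, hlb u v z]
      linear_combination e3 - e2
    exact sub_eq_zero.mp (hnondeg _ h0)
  refine ⟨lsym, ?_⟩
  -- Jacobi from left symmetry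
  have hb2 : ∀ u v : A, brk u v = star u v - star v u := by
    intro u v; rw [hbrk u v, ← hdiff u v]
  have key : ∀ a b c : A, star (star a b) c - star (star b a) c
      = star a (star b c) - star b (star a c) :=
    fun a b c => sub_eq_sub_iff_sub_eq_sub.mp (lsym a b c)
  intro u v w
  have expand : ∀ a b c : A, brk (brk a b) c
      = star (star a b) c - star (star b a) c - star c (star a b) + star c (star b a) := by
    intro a b c
    rw [hb2 (brk a b) c, hb2 a b]
    simp only [map_sub, LinearMap.sub_apply]
    abel
  rw [expand u v w, expand v w u, expand w u v, key u v w, key v w u, key w u v]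
  abel
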